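/- Fix positive integers n and p, and let e_k denote the k-th elementary symmetric polynomial in nonzero complex variables z_1,...,z_n (with e_k = 0 for k outside {0,...,n}). Then ∑_{k=0}^{n} [ C(2p-1,p) e_k(z)^2 + ∑_{j=1}^{p} (-1)^j C(2p,p-j) e_{k+j}(z) e_{k-j}(z) ] = e_n(z) * ∑_{k=0}^{⌊n/2⌋} (S(p,k)/2) e_{n-2k}(z_1 + 1/z_1, ..., z_n + 1/z_n), where S(p,k) = C(2p,p)C(2k,k)/C(p+k,p). -/

import Mathlib

/-- The `k`-th elementary symmetric function of `z 0, …, z (n-1)`; it vanishes for `k > n`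
and `esym n z 0 = 1`. -/
noncomputable def esym (n : ℕ) (z : Fin n → ℂ) (k : ℕ) : ℂ :=
  ∑ s ∈ Finset.powersetCard k (Finset.univ : Finset (Fin n)), ∏ i ∈ s, z i

/-- Elementary symmetric function with integer index: `0` for negative index. -/
noncomputable def esymZ (n : ℕ) (z : Fin n → ℂ) (k : ℤ) : ℂ :=
  if 0 ≤ k then esym n z k.toNat else 0

/-- The super Catalan number `S(p,k)` as a rational number. -/
def superCatalan (p k : ℕ) : ℚ :=
  (((2 * p).choose p : ℚ) * ((2 * k).choose k : ℚ)) / ((p + k).choose p : ℚ)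

open Polynomial Finset

section NumericCore
noncomputable def cpk (p k : ℕ) : ℚ :=
  (((1 + X) ^ (2 * p) * (1 - X) ^ (2 * k) : Polynomial ℚ)).coeff (p + k)

lemma neg_one_pow_sub (m j : ℕ) (h : j ≤ 2 * m) :
    ((-1 : ℚ)) ^ (2 * m - j) = (-1) ^ j := by
  have h1 : ((-1 : ℚ)) ^ (2 * m - j) * (-1) ^ j = 1 := by
    rw [← pow_add, Nat.sub_add_cancel h]
    exact Even.neg_one_pow (even_two_mul m)
  have h2 : ((-1:ℚ))^j * ((-1:ℚ))^j = 1 := by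
    rw [← pow_add, ← two_mul]; exact Even.neg_one_pow (even_two_mul j)
  calc ((-1 : ℚ)) ^ (2 * m - j) = ((-1 : ℚ)) ^ (2 * m - j) * (((-1:ℚ))^j * ((-1:ℚ))^j) := by
        rw [h2, mul_one]
    _ = (((-1 : ℚ)) ^ (2 * m - j) * ((-1:ℚ))^j) * ((-1:ℚ))^j := by ring
    _ = (-1) ^ j := by rw [h1, one_mul]

lemma one_sub_X_pow_coeff (m j : ℕ) :
    (((1 - X : Polynomial ℚ)) ^ (2 * m)).coeff j = (-1) ^ j * ((2 * m).choose j : ℚ) := by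
  have h1 : ((1 - X : Polynomial ℚ)) ^ (2 * m) = (X + C (-1 : ℚ)) ^ (2 * m) := by
    have h : (X + C (-1 : ℚ)) = -(1 - X) := by
      simp [map_neg, C_1]; ring
    rw [h, Even.neg_pow (even_two_mul m)]
  rw [h1, coeff_X_add_C_pow]
  rcases le_or_gt j (2 * m) with h | h
  · rw [neg_one_pow_sub m j h]
  · rw [Nat.choose_eq_zero_of_lt h]; simp

lemma cpk_zero (k : ℕ) : cpk 0 k = (-1) ^ k * ((2 * k).choose k : ℚ) := by
  simp [cpk, one_sub_X_pow_coeff]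

lemma cpk_rec (p k : ℕ) : cpk (p + 1) k - cpk p (k + 1) = 4 * cpk p k := by
  set G : Polynomial ℚ := (1 + X) ^ (2 * p) * (1 - X) ^ (2 * k) with hG
  have e1 : ((1 + X) ^ (2 * (p+1)) * (1 - X) ^ (2 * k) : Polynomial ℚ)
      - (1 + X) ^ (2 * p) * (1 - X) ^ (2 * (k+1))
      = C 4 * (X * G) := by
    rw [hG]
    have h2 : 2 * (p + 1) = 2 * p + 2 := by ring
    have h3 : 2 * (k + 1) = 2 * k + 2 := by ring
    rw [h2, h3]
    have : (C 4 : Polynomial ℚ) = 4 := map_ofNat C 4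
    rw [this]; ring
  have := congrArg (fun q : Polynomial ℚ => q.coeff (p + k + 1)) e1
  simp only [coeff_sub] at this
  have hl : (p + 1) + k = p + k + 1 := by ring
  have hr : p + (k + 1) = p + k + 1 := by ring
  rw [cpk, cpk, cpk, hl, hr, this, coeff_C_mul, coeff_X_mul]

lemma superCatalan_eq_factorial (p k : ℕ) :
    superCatalan p k = ((2*p).factorial : ℚ) * (2*k).factorial /
      ((p.factorial : ℚ) * k.factorial * (p+k).factorial) := by
  have hp' : 2*p - p = p := by omega
  have h1 : ((2*p).choose p : ℚ) = (2*p).factorial / (p.factorial * p.factorial) := by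
    rw [Nat.cast_choose ℚ (by omega), hp']
  have hk' : 2*k - k = k := by omega
  have h2 : ((2*k).choose k : ℚ) = (2*k).factorial / (k.factorial * k.factorial) := by
    rw [Nat.cast_choose ℚ (by omega), hk']
  have hpk' : p + k - p = k := by omega
  have h3 : (((p+k)).choose p : ℚ) = (p+k).factorial / (p.factorial * k.factorial) := by
    rw [Nat.cast_choose ℚ (by omega), hpk']
  rw [superCatalan, h1, h2, h3]
  have f1 : (p.factorial : ℚ) ≠ 0 := Nat.cast_ne_zero.2 p.factorial_ne_zero
  have f2 : (k.factorial : ℚ) ≠ 0 := Nat.cast_ne_zero.2 k.factorial_ne_zero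
  have f3 : ((p+k).factorial : ℚ) ≠ 0 := Nat.cast_ne_zero.2 (p+k).factorial_ne_zero
  field_simp

lemma superCatalan_rec (p k : ℕ) :
    superCatalan (p + 1) k = 4 * superCatalan p k - superCatalan p (k + 1) := by
  rw [superCatalan_eq_factorial, superCatalan_eq_factorial, superCatalan_eq_factorial]
  have e1 : (2 * (p+1)) = (2*p) + 1 + 1 := by ring
  have e2 : (2 * (k+1)) = (2*k) + 1 + 1 := by ring
  have e3 : (p + 1) + k = (p + k) + 1 := by ring
  have e4 : p + (k + 1) = (p + k) + 1 := by ring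
  rw [e1, e2, e3, e4]
  simp only [Nat.factorial_succ]
  have f1 : (p.factorial : ℚ) ≠ 0 := Nat.cast_ne_zero.2 p.factorial_ne_zero
  have f2 : (k.factorial : ℚ) ≠ 0 := Nat.cast_ne_zero.2 k.factorial_ne_zero
  have f3 : ((p+k).factorial : ℚ) ≠ 0 := Nat.cast_ne_zero.2 (p+k).factorial_ne_zero
  have f4 : ((2*p).factorial : ℚ) ≠ 0 := Nat.cast_ne_zero.2 (2*p).factorial_ne_zero
  have f5 : ((2*k).factorial : ℚ) ≠ 0 := Nat.cast_ne_zero.2 (2*k).factorial_ne_zero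
  have g1 : ((p:ℚ) + 1) ≠ 0 := by positivity
  have g2 : ((k:ℚ) + 1) ≠ 0 := by positivity
  have g3 : ((p:ℚ) + k + 1) ≠ 0 := by positivity
  push_cast
  field_simp
  ring

lemma cpk_eq_superCatalan (p k : ℕ) : (-1 : ℚ) ^ k * cpk p k = superCatalan p k := by
  induction p generalizing k with
  | zero =>
    rw [cpk_zero]
    have : superCatalan 0 k = ((2*k).choose k : ℚ) := by
      simp [superCatalan]
    rw [this]
    have h2 : ((-1:ℚ))^k * ((-1:ℚ))^k = 1 := by
      rw [← pow_add, ← two_mul]; exact Even.neg_one_pow (even_two_mul k)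
    calc (-1:ℚ)^k * ((-1:ℚ)^k * ((2*k).choose k : ℚ))
        = ((-1:ℚ)^k * (-1:ℚ)^k) * ((2*k).choose k : ℚ) := by ring
      _ = ((2*k).choose k : ℚ) := by rw [h2, one_mul]
  | succ p ih =>
    have hrec := cpk_rec p k
    have h1 : cpk (p+1) k = 4 * cpk p k + cpk p (k+1) := by linarith
    rw [h1, superCatalan_rec p k, ← ih k, ← ih (k+1)]
    have : ((-1:ℚ))^(k+1) = -((-1:ℚ)^k) := by rw [pow_succ]; ring
    rw [this]
    ring

lemma cpk_sum (p k : ℕ) :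
    cpk p k = ∑ i ∈ range (p + k + 1),
      ((2*p).choose i : ℚ) * ((-1:ℚ)^(p+k-i) * ((2*k).choose (p+k-i) : ℚ)) := by
  rw [cpk, coeff_mul, Finset.Nat.sum_antidiagonal_eq_sum_range_succ_mk]
  apply Finset.sum_congr rfl
  intro i _
  rw [coeff_one_add_X_pow, one_sub_X_pow_coeff]

lemma choose_two_mul_self (p : ℕ) (hp : 0 < p) :
    (2*p).choose p = 2 * ((2*p - 1).choose p) := by
  obtain ⟨q, rfl⟩ : ∃ q, p = q + 1 := ⟨p - 1, by omega⟩
  have h1 : 2*(q+1) = (2*q+1) + 1 := by ring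
  have h2 : 2*(q+1) - 1 = 2*q+1 := by omega
  rw [h1]
  simp only [Nat.add_sub_cancel]
  rw [Nat.choose_succ_succ]
  have h3 : (2*q+1).choose q = (2*q+1).choose (q+1) := by
    have he := Nat.choose_symm (show q+1 ≤ 2*q+1 by omega)
    have he2 : 2*q+1 - (q+1) = q := by omega
    rw [he2] at he
    exact he
  simp only [Nat.succ_eq_add_one]
  omega

lemma vonSzily_half (p k : ℕ) (hp : 0 < p) :
    (((2*p - 1).choose p : ℚ)) * ((2*k).choose k : ℚ)
      + ∑ j ∈ Icc 1 p, (-1:ℚ)^j * ((2*p).choose (p-j) : ℚ) * ((2*k).choose (k+j) : ℚ)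
      = superCatalan p k / 2 := by
  set J : ℚ := ∑ j ∈ Icc 1 p, (-1:ℚ)^j * ((2*p).choose (p-j) : ℚ) * ((2*k).choose (k+j) : ℚ)
    with hJ
  -- the full symmetric sum identity
  have key : superCatalan p k = ((2*p).choose p : ℚ) * ((2*k).choose k : ℚ) + 2 * J := by
    rw [← cpk_eq_superCatalan, cpk_sum]
    set f : ℕ → ℚ := fun i =>
      ((2*p).choose i : ℚ) * ((-1:ℚ)^(p+k-i) * ((2*k).choose (p+k-i) : ℚ)) with hf
    have hsplit : ∑ i ∈ range (p + k + 1), f i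
        = (∑ i ∈ range p, f i) + f p + ∑ i ∈ Ico (p+1) (p+k+1), f i := by
      rw [← Finset.sum_range_add_sum_Ico f (show p ≤ p+k+1 by omega),
        Finset.sum_eq_sum_Ico_succ_bot (show p < p+k+1 by omega) f]
      ring
    rw [hsplit]
    -- lower part
    have hlow : ∑ i ∈ range p, f i
        = ∑ j ∈ Icc 1 p, ((-1:ℚ)^(k+j) * (((2*p).choose (p-j) : ℚ) * ((2*k).choose (k+j) : ℚ))) := by
      rw [← Finset.sum_range_reflect]
      have hIcc : Icc 1 p = Ico 1 (p+1) := rfl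
      rw [hIcc, Finset.sum_Ico_eq_sum_range]
      simp only [Nat.add_sub_cancel]
      apply Finset.sum_congr rfl
      intro i hi
      simp only [Finset.mem_range] at hi
      have e1 : p - 1 - i = p - (1 + i) := by omega
      have e2 : p + k - (p - (1+i)) = k + (1+i) := by omega
      rw [hf]
      simp only
      rw [e1, e2]
      ring
    -- upper part
    have hup : ∑ i ∈ Ico (p+1) (p+k+1), f i
        = ∑ j ∈ Icc 1 k, ((-1:ℚ)^(k-j) * (((2*p).choose (p+j) : ℚ) * ((2*k).choose (k-j) : ℚ))) := by
      rw [Finset.sum_Ico_eq_sum_range]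
      have hIcc : Icc 1 k = Ico 1 (k+1) := rfl
      rw [hIcc, Finset.sum_Ico_eq_sum_range]
      simp only [Nat.add_sub_cancel]
      apply Finset.sum_congr (by congr 1; omega) 
      intro i hi
      simp only [Finset.mem_range] at hi
      have e1 : p + 1 + i = p + (1 + i) := by omega
      have e2 : p + k - (p + (1+i)) = k - (1+i) := by omega
      rw [hf]
      simp only
      rw [e1, e2]
      ring
    rw [hlow, hup]
    -- fold in the (-1)^k factor
    rw [mul_add, mul_add, Finset.mul_sum, Finset.mul_sum]
    have hmid : (-1:ℚ)^k * f p = ((2*p).choose p : ℚ) * ((2*k).choose k : ℚ) := by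
      rw [hf]
      simp only
      have : p + k - p = k := by omega
      rw [this]
      have h2 : ((-1:ℚ))^k * ((-1:ℚ))^k = 1 := by
        rw [← pow_add, ← two_mul]; exact Even.neg_one_pow (even_two_mul k)
      calc (-1:ℚ)^k * (((2*p).choose p : ℚ) * ((-1:ℚ)^k * ((2*k).choose k : ℚ)))
          = ((-1:ℚ)^k * (-1:ℚ)^k) * (((2*p).choose p : ℚ) * ((2*k).choose k : ℚ)) := by ring
        _ = _ := by rw [h2, one_mul]
    have hlow2 : ∑ j ∈ Icc 1 p, (-1:ℚ)^k *
        ((-1:ℚ)^(k+j) * (((2*p).choose (p-j) : ℚ) * ((2*k).choose (k+j) : ℚ))) = J := by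
      rw [hJ]
      apply Finset.sum_congr rfl
      intro j _
      have h2 : ((-1:ℚ))^k * ((-1:ℚ))^(k+j) = (-1:ℚ)^j := by
        rw [← pow_add]
        have : k + (k + j) = 2*k + j := by ring
        rw [this, pow_add, Even.neg_one_pow (even_two_mul k), one_mul]
      calc (-1:ℚ)^k * ((-1:ℚ)^(k+j) * (((2*p).choose (p-j) : ℚ) * ((2*k).choose (k+j) : ℚ)))
          = ((-1:ℚ)^k * (-1:ℚ)^(k+j)) * (((2*p).choose (p-j) : ℚ) * ((2*k).choose (k+j) : ℚ)) := by
            ring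
        _ = _ := by rw [h2]; ring
    have hup2 : ∑ j ∈ Icc 1 k, (-1:ℚ)^k *
        ((-1:ℚ)^(k-j) * (((2*p).choose (p+j) : ℚ) * ((2*k).choose (k-j) : ℚ))) = J := by
      have step1 : ∀ j ∈ Icc 1 k, (-1:ℚ)^k *
          ((-1:ℚ)^(k-j) * (((2*p).choose (p+j) : ℚ) * ((2*k).choose (k-j) : ℚ)))
          = (-1:ℚ)^j * (((2*p).choose (p+j) : ℚ) * ((2*k).choose (k-j) : ℚ)) := by
        intro j hj
        simp only [Finset.mem_Icc] at hj
        have h2 : ((-1:ℚ))^k * ((-1:ℚ))^(k-j) = (-1:ℚ)^j := by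
          rw [← pow_add]
          have e : k + (k - j) = 2*k - j := by omega
          rw [e]
          exact neg_one_pow_sub k j (by omega)
        calc (-1:ℚ)^k * ((-1:ℚ)^(k-j) * (((2*p).choose (p+j) : ℚ) * ((2*k).choose (k-j) : ℚ)))
            = ((-1:ℚ)^k * (-1:ℚ)^(k-j)) * (((2*p).choose (p+j) : ℚ) * ((2*k).choose (k-j) : ℚ)) := by
              ring
          _ = _ := by rw [h2]
      rw [Finset.sum_congr rfl step1, hJ]
      -- both sums restrict to Icc 1 (min p k)
      have hU : ∑ j ∈ Icc 1 k, (-1:ℚ)^j * (((2*p).choose (p+j) : ℚ) * ((2*k).choose (k-j) : ℚ))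
          = ∑ j ∈ Icc 1 (min p k), (-1:ℚ)^j * (((2*p).choose (p+j) : ℚ) * ((2*k).choose (k-j) : ℚ)) := by
        apply (Finset.sum_subset (Finset.Icc_subset_Icc_right (by omega)) _).symm
        intro j hj hj'
        simp only [Finset.mem_Icc] at hj hj'
        have hpj : (2*p).choose (p+j) = 0 := Nat.choose_eq_zero_of_lt (by omega)
        rw [hpj]
        simp
      have hJ' : ∑ j ∈ Icc 1 p, (-1:ℚ)^j * ((2*p).choose (p-j) : ℚ) * ((2*k).choose (k+j) : ℚ)
          = ∑ j ∈ Icc 1 (min p k), (-1:ℚ)^j * ((2*p).choose (p-j) : ℚ) * ((2*k).choose (k+j) : ℚ) := by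
        apply (Finset.sum_subset (Finset.Icc_subset_Icc_right (by omega)) _).symm
        intro j hj hj'
        simp only [Finset.mem_Icc] at hj hj'
        have hkj : (2*k).choose (k+j) = 0 := Nat.choose_eq_zero_of_lt (by omega)
        rw [hkj]
        simp
      rw [hU, hJ']
      apply Finset.sum_congr rfl
      intro j hj
      simp only [Finset.mem_Icc, le_min_iff] at hj
      have c1 : (2*p).choose (p+j) = (2*p).choose (p-j) := by
        have : 2*p - (p+j) = p - j := by omega
        rw [← this, Nat.choose_symm (by omega)]
      have c2 : (2*k).choose (k-j) = (2*k).choose (k+j) := by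
        have : 2*k - (k+j) = k - j := by omega
        rw [← this, Nat.choose_symm (by omega)]
      rw [c1, c2]
      ring
    rw [hmid, hlow2, hup2]
    ring
  -- conclude
  have hc : ((2*p).choose p : ℚ) = 2 * ((2*p - 1).choose p : ℚ) := by
    rw [choose_two_mul_self p hp]
    push_cast
    ring
  rw [key, hc]
  ring

end NumericCore

section PolyCore

lemma esym_eq_zero (n : ℕ) (f : Fin n → ℂ) (k : ℕ) (h : n < k) : esym n f k = 0 := by
  rw [esym, Finset.powersetCard_eq_empty.2 (by simpa using h), Finset.sum_empty]

lemma esym_coeff (n : ℕ) (f : Fin n → ℂ) (k : ℕ) :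
    (∏ i : Fin n, (C (f i) * X + 1) : Polynomial ℂ).coeff k = esym n f k := by
  rw [Finset.prod_add]
  rw [finset_sum_coeff]
  have hterm : ∀ t ∈ (univ : Finset (Fin n)).powerset,
      ((∏ i ∈ t, C (f i) * X) * ∏ _i ∈ univ \ t, (1 : ℂ[X])).coeff k
        = if t.card = k then ∏ i ∈ t, f i else 0 := by
    intro t _
    rw [Finset.prod_const_one, mul_one, Finset.prod_mul_distrib, Finset.prod_const,
      ← map_prod, coeff_C_mul, coeff_X_pow]
    by_cases h : t.card = k
    · simp [h]
    · simp [h, Ne.symm h]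
  rw [Finset.sum_congr rfl hterm, ← Finset.sum_filter, esym, ← Finset.powersetCard_eq_filter]

lemma prodXC_coeff (n : ℕ) (z : Fin n → ℂ) (b : ℕ) (hb : b ≤ n) :
    (∏ i : Fin n, (X + C (z i)) : Polynomial ℂ).coeff b = esym n z (n - b) := by
  have h := Finset.prod_X_add_C_coeff (univ : Finset (Fin n)) z
    (k := b) (by simpa using hb)
  rw [h, esym]
  congr 1
  simp

lemma prodXC_coeff_zero (n : ℕ) (z : Fin n → ℂ) (b : ℕ) (hb : n < b) :
    (∏ i : Fin n, (X + C (z i)) : Polynomial ℂ).coeff b = 0 := by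
  apply coeff_eq_zero_of_natDegree_lt
  have : (∏ i : Fin n, (X + C (z i)) : Polynomial ℂ).natDegree = n := by
    rw [natDegree_prod _ _ (fun i _ => X_add_C_ne_zero (z i))]
    simp [natDegree_X_add_C]
  omega

lemma one_add_X_sq_pow_coeff (N d : ℕ) :
    ((1 + X ^ 2 : Polynomial ℂ) ^ N).coeff d
      = if Even d then (N.choose (d / 2) : ℂ) else 0 := by
  rw [add_comm, add_pow, finset_sum_coeff]
  have hterm : ∀ i ∈ range (N + 1),
      (((X : ℂ[X]) ^ 2) ^ i * 1 ^ (N - i) * (N.choose i : ℂ[X])).coeff d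
        = if d = 2 * i then (N.choose i : ℂ) else 0 := by
    intro i _
    rw [one_pow, mul_one, ← pow_mul, ← C_eq_natCast, coeff_mul_C, coeff_X_pow]
    by_cases h : d = 2 * i
    · simp [h]
    · simp [h]
  rw [Finset.sum_congr rfl hterm]
  by_cases hev : Even d
  · obtain ⟨m, hm⟩ := hev
    have hd2 : d / 2 = m := by omega
    have hcond : ∀ i, (d = 2 * i) = (i = m) := by
      intro i
      apply propext
      constructor <;> intro h <;> omega
    have : ∀ i ∈ range (N+1), (if d = 2 * i then (N.choose i : ℂ) else 0)
        = if i = m then (N.choose i : ℂ) else 0 := by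
      intro i _
      by_cases h : i = m
      · rw [if_pos h, if_pos (by omega)]
      · rw [if_neg h, if_neg (by intro h2; omega)]
    rw [Finset.sum_congr rfl this, Finset.sum_ite_eq' (range (N+1)) m]
    simp only [Finset.mem_range, hd2]
    by_cases hm2 : m < N + 1
    · rw [if_pos hm2, if_pos (show Even d from ⟨m, hm⟩)]
    · rw [if_neg hm2, if_pos (show Even d from ⟨m, hm⟩), Nat.choose_eq_zero_of_lt (by omega)]
      simp
  · rw [if_neg hev]
    apply Finset.sum_eq_zero
    intro i _
    rw [if_neg (by intro h; exact hev ⟨i, by omega⟩)]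

lemma esym_top (n : ℕ) (z : Fin n → ℂ) : esym n z n = ∏ i : Fin n, z i := by
  rw [esym]
  have h : Finset.powersetCard n (univ : Finset (Fin n)) = {univ} := by
    simpa using Finset.powersetCard_self (univ : Finset (Fin n))
  rw [h, Finset.sum_singleton]

lemma prod_factor (n : ℕ) (z : Fin n → ℂ) (hz : ∀ i, z i ≠ 0) :
    ((∏ i : Fin n, (C (z i) * X + 1)) * (∏ i : Fin n, (X + C (z i))) : Polynomial ℂ)
      = C (esym n z n) * ∏ i : Fin n, (C (z i + (z i)⁻¹) * X + (1 + X ^ 2)) := by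
  rw [esym_top, map_prod, ← Finset.prod_mul_distrib, ← Finset.prod_mul_distrib]
  apply Finset.prod_congr rfl
  intro i _
  have h : C (z i) * C ((z i)⁻¹) = 1 := by
    rw [← map_mul, mul_inv_cancel₀ (hz i), map_one]
  rw [map_add]
  linear_combination (-(X : ℂ[X])) * h

lemma prod_w_expand (n : ℕ) (w : Fin n → ℂ) :
    (∏ i : Fin n, (C (w i) * X + (1 + X ^ 2)) : Polynomial ℂ)
      = ∑ s ∈ range (n + 1), C (esym n w s) * (X ^ s * (1 + X ^ 2) ^ (n - s)) := by
  rw [Finset.prod_add]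
  rw [show ((univ : Finset (Fin n)).powerset) = (univ : Finset (Fin n)).powerset from rfl]
  rw [Finset.sum_powerset]
  rw [show ((univ : Finset (Fin n)).card) = n from by simp]
  apply Finset.sum_congr rfl
  intro s hs
  rw [esym, map_sum, Finset.sum_mul]
  apply Finset.sum_congr rfl
  intro t ht
  obtain ⟨hts, htc⟩ := Finset.mem_powersetCard.1 ht
  rw [Finset.prod_mul_distrib, Finset.prod_const, Finset.prod_const, ← map_prod,
    Finset.card_sdiff_of_subset hts, htc]
  rw [show ((univ : Finset (Fin n)).card) = n from by simp]
  ring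

lemma coeffP_right (n : ℕ) (z : Fin n → ℂ) (hz : ∀ i, z i ≠ 0) (j : ℕ) :
    ((∏ i : Fin n, (C (z i) * X + 1)) * (∏ i : Fin n, (X + C (z i))) : Polynomial ℂ).coeff
        (n + 2 * j)
      = esym n z n * ∑ s ∈ range (n + 1),
          esym n (fun i => z i + (z i)⁻¹) s *
            (if Even (n - s) then (((n - s).choose ((n - s) / 2 + j)) : ℂ) else 0) := by
  rw [prod_factor n z hz, prod_w_expand, coeff_C_mul, finset_sum_coeff]
  congr 1
  apply Finset.sum_congr rfl
  intro s hs
  simp only [Finset.mem_range] at hs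
  have hsn : s ≤ n := by omega
  rw [coeff_C_mul]
  have hd : n + 2 * j = (n - s + 2 * j) + s := by omega
  rw [hd, coeff_X_pow_mul, one_add_X_sq_pow_coeff]
  congr 1
  by_cases hev : Even (n - s)
  · rw [if_pos (by simpa [Nat.even_add] using hev), if_pos hev]
    obtain ⟨m, hm⟩ := hev
    rw [show (n - s + 2 * j) / 2 = (n - s) / 2 + j from by omega]
  · rw [if_neg (by simpa [Nat.even_add] using hev), if_neg hev]

lemma coeffP_mid (n : ℕ) (z : Fin n → ℂ) :
    ((∏ i : Fin n, (C (z i) * X + 1)) * (∏ i : Fin n, (X + C (z i))) : Polynomial ℂ).coeff n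
      = ∑ k ∈ range (n + 1), esym n z k ^ 2 := by
  rw [coeff_mul, Finset.Nat.sum_antidiagonal_eq_sum_range_succ_mk]
  apply Finset.sum_congr rfl
  intro i hi
  simp only [Finset.mem_range] at hi
  rw [esym_coeff, prodXC_coeff n z (n - i) (by omega)]
  rw [show n - (n - i) = i from by omega, sq]

lemma coeffP_left (n : ℕ) (z : Fin n → ℂ) (j : ℕ) (hj : 1 ≤ j) :
    ((∏ i : Fin n, (C (z i) * X + 1)) * (∏ i : Fin n, (X + C (z i))) : Polynomial ℂ).coeff
        (n + 2 * j)
      = ∑ k ∈ range (n + 1), esym n z (k + j) * esymZ n z ((k : ℤ) - j) := by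
  rw [coeff_mul, Finset.Nat.sum_antidiagonal_eq_sum_range_succ_mk]
  have hterm : ∀ i ∈ range (n + 2 * j + 1),
      ((∏ i : Fin n, (C (z i) * X + 1) : Polynomial ℂ)).coeff i *
        ((∏ i : Fin n, (X + C (z i)) : Polynomial ℂ)).coeff (n + 2 * j - i)
      = if 2 * j ≤ i then esym n z i * esym n z (i - 2 * j) else 0 := by
    intro i hi
    simp only [Finset.mem_range] at hi
    rw [esym_coeff]
    by_cases h : 2 * j ≤ i
    · rw [if_pos h, prodXC_coeff n z (n + 2 * j - i) (by omega),
        show n - (n + 2 * j - i) = i - 2 * j from by omega]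
    · rw [if_neg h, prodXC_coeff_zero n z (n + 2 * j - i) (by omega), mul_zero]
  rw [show (n + 2 * j).succ = n + 2 * j + 1 from rfl, Finset.sum_congr rfl hterm]
  have hsub : ∑ i ∈ range (n + 2 * j + 1),
        (if 2 * j ≤ i then esym n z i * esym n z (i - 2 * j) else 0)
      = ∑ i ∈ Ico j (n + j + 1),
        (if 2 * j ≤ i then esym n z i * esym n z (i - 2 * j) else 0) := by
    apply (Finset.sum_subset _ _).symm
    · intro x hx
      simp only [Finset.mem_Ico] at hx
      simp only [Finset.mem_range]
      omega
    · intro x hx hx'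
      simp only [Finset.mem_range] at hx
      simp only [Finset.mem_Ico, not_and_or, not_le] at hx'
      rcases hx' with h1 | h2
      · rw [if_neg (by omega)]
      · by_cases h : 2 * j ≤ x
        · rw [if_pos h, esym_eq_zero n z x (by omega), zero_mul]
        · rw [if_neg h]
  rw [hsub, Finset.sum_Ico_eq_sum_range, show n + j + 1 - j = n + 1 from by omega]
  apply Finset.sum_congr rfl
  intro k hk
  by_cases h : j ≤ k
  · rw [if_pos (by omega), show j + k - 2 * j = k - j from by omega,
      show j + k = k + j from by omega, esymZ, if_pos (by omega : (0:ℤ) ≤ (k:ℤ) - j),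
      show ((k : ℤ) - j).toNat = k - j from by omega]
  · rw [if_neg (by omega), esymZ, if_neg (by omega : ¬ (0:ℤ) ≤ (k:ℤ) - j), mul_zero]

end PolyCore

/-- Lemma 2.7 (`Q^p`): the symmetric function identity for the operators `L_k^p`. -/
theorem esym_Lkp_identity (n p : ℕ) (hn : 0 < n) (hp : 0 < p) (z : Fin n → ℂ)
    (hz : ∀ i, z i ≠ 0) :
    ∑ k ∈ Finset.range (n + 1),
        (((2 * p - 1).choose p : ℂ) * (esym n z k) ^ 2 +
          ∑ j ∈ Finset.Icc 1 p,
            (-1 : ℂ) ^ j * ((2 * p).choose (p - j) : ℂ) *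
              esym n z (k + j) * esymZ n z ((k : ℤ) - j)) =
      esym n z n *
        ∑ k ∈ Finset.range (n / 2 + 1),
          ((superCatalan p k / 2 : ℚ) : ℂ) *
            esym n (fun i => z i + (z i)⁻¹) (n - 2 * k) := by
  classical
  set w : Fin n → ℂ := fun i => z i + (z i)⁻¹ with hw
  set P : Polynomial ℂ :=
    (∏ i : Fin n, (C (z i) * X + 1)) * (∏ i : Fin n, (X + C (z i))) with hP
  have hcoeffR : ∀ j : ℕ, P.coeff (n + 2 * j)
      = esym n z n * ∑ s ∈ range (n + 1), esym n w s *
          (if Even (n - s) then (((n - s).choose ((n - s) / 2 + j)) : ℂ) else 0) :=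
    coeffP_right n z hz
  -- Step 1 : rewrite the LHS via coefficients of P
  have step1 : ∑ k ∈ Finset.range (n + 1),
        (((2 * p - 1).choose p : ℂ) * (esym n z k) ^ 2 +
          ∑ j ∈ Finset.Icc 1 p,
            (-1 : ℂ) ^ j * ((2 * p).choose (p - j) : ℂ) *
              esym n z (k + j) * esymZ n z ((k : ℤ) - j))
      = ((2 * p - 1).choose p : ℂ) * P.coeff n
        + ∑ j ∈ Icc 1 p, (-1 : ℂ) ^ j * ((2 * p).choose (p - j) : ℂ) * P.coeff (n + 2 * j) := by
    rw [Finset.sum_add_distrib, coeffP_mid, Finset.mul_sum, Finset.sum_comm]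
    congr 1
    apply Finset.sum_congr rfl
    intro j hj
    rw [coeffP_left n z j (Finset.mem_Icc.1 hj).1, Finset.mul_sum]
    apply Finset.sum_congr rfl
    intro k _
    ring
  rw [step1]
  rw [show P.coeff n = esym n z n * ∑ s ∈ range (n + 1), esym n w s *
      (if Even (n - s) then (((n - s).choose ((n - s) / 2 + 0)) : ℂ) else 0) from by
    simpa using hcoeffR 0]
  have hsum_j : ∑ j ∈ Icc 1 p, (-1 : ℂ) ^ j * ((2 * p).choose (p - j) : ℂ) * P.coeff (n + 2 * j)
      = esym n z n * ∑ j ∈ Icc 1 p, (-1 : ℂ) ^ j * ((2 * p).choose (p - j) : ℂ) *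
          (∑ s ∈ range (n + 1), esym n w s *
            (if Even (n - s) then (((n - s).choose ((n - s) / 2 + j)) : ℂ) else 0)) := by
    rw [Finset.mul_sum]
    apply Finset.sum_congr rfl
    intro j _
    rw [hcoeffR j]
    ring
  rw [hsum_j]
  -- the numeric bracket identity
  have bracket : ∀ s ∈ range (n + 1),
      ((2 * p - 1).choose p : ℂ) *
          (if Even (n - s) then (((n - s).choose ((n - s) / 2 + 0)) : ℂ) else 0)
        + ∑ j ∈ Icc 1 p, (-1 : ℂ) ^ j * ((2 * p).choose (p - j) : ℂ) *
            (if Even (n - s) then (((n - s).choose ((n - s) / 2 + j)) : ℂ) else 0)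
      = (if Even (n - s) then ((superCatalan p ((n - s) / 2) / 2 : ℚ) : ℂ) else 0) := by
    intro s _
    by_cases hev : Even (n - s)
    · set k := (n - s) / 2 with hk
      have h2 : n - s = 2 * k := by
        obtain ⟨m, hm⟩ := hev
        omega
      simp only [if_pos hev, add_zero]
      rw [h2]
      have hC := congrArg (fun q : ℚ => (q : ℂ)) (vonSzily_half p k hp)
      push_cast at hC
      push_cast
      convert hC using 2 with j hj
    · simp only [if_neg hev, mul_zero, add_zero]
      rw [Finset.sum_eq_zero (fun j _ => by ring), add_zero]
  -- reindex the RHS sum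
  have rhs_eq : ∑ k ∈ range (n / 2 + 1),
        ((superCatalan p k / 2 : ℚ) : ℂ) * esym n w (n - 2 * k)
      = ∑ s ∈ range (n + 1), esym n w s *
          (if Even (n - s) then ((superCatalan p ((n - s) / 2) / 2 : ℚ) : ℂ) else 0) := by
    symm
    rw [← Finset.sum_filter_of_ne (s := range (n + 1))
      (f := fun s => esym n w s *
        (if Even (n - s) then ((superCatalan p ((n - s) / 2) / 2 : ℚ) : ℂ) else 0))
      (p := fun s => Even (n - s))
      (by intro x _ hx; by_contra h; apply hx; simp only [if_neg h, mul_zero])]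
    apply Finset.sum_nbij' (i := fun s => (n - s) / 2) (j := fun k => n - 2 * k)
    · intro s hs
      simp only [Finset.mem_filter, Finset.mem_range] at hs
      simp only [Finset.mem_range]
      omega
    · intro k hk
      simp only [Finset.mem_range] at hk
      simp only [Finset.mem_filter, Finset.mem_range]
      refine ⟨by omega, ⟨k, by omega⟩⟩
    · intro s hs
      simp only [Finset.mem_filter, Finset.mem_range] at hs
      obtain ⟨hs1, m, hm⟩ := hs
      omega
    · intro k hk
      simp only [Finset.mem_range] at hk
      omega
    · intro s hs
      simp only [Finset.mem_filter, Finset.mem_range] at hs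
      obtain ⟨hs1, hev⟩ := hs
      have h2 : n - 2 * ((n - s) / 2) = s := by
        obtain ⟨m, hm⟩ := hev
        omega
      rw [if_pos hev, h2]
      ring
  rw [rhs_eq]
  -- distribute the bracket identity
  have final : ∑ s ∈ range (n + 1), esym n w s *
        (if Even (n - s) then ((superCatalan p ((n - s) / 2) / 2 : ℚ) : ℂ) else 0)
      = ((2 * p - 1).choose p : ℂ) * (∑ s ∈ range (n + 1), esym n w s *
          (if Even (n - s) then (((n - s).choose ((n - s) / 2 + 0)) : ℂ) else 0))
        + ∑ j ∈ Icc 1 p, (-1 : ℂ) ^ j * ((2 * p).choose (p - j) : ℂ) *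
            (∑ s ∈ range (n + 1), esym n w s *
              (if Even (n - s) then (((n - s).choose ((n - s) / 2 + j)) : ℂ) else 0)) := by
    calc ∑ s ∈ range (n + 1), esym n w s *
          (if Even (n - s) then ((superCatalan p ((n - s) / 2) / 2 : ℚ) : ℂ) else 0)
        = ∑ s ∈ range (n + 1),
            (esym n w s * (((2 * p - 1).choose p : ℂ) *
              (if Even (n - s) then (((n - s).choose ((n - s) / 2 + 0)) : ℂ) else 0))
            + ∑ j ∈ Icc 1 p, esym n w s * ((-1 : ℂ) ^ j * ((2 * p).choose (p - j) : ℂ) *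
              (if Even (n - s) then (((n - s).choose ((n - s) / 2 + j)) : ℂ) else 0))) := by
          apply Finset.sum_congr rfl
          intro s hs
          rw [← bracket s hs, mul_add, Finset.mul_sum]
      _ = _ := by
          rw [Finset.sum_add_distrib, Finset.sum_comm]
          congr 1
          · rw [Finset.mul_sum]
            apply Finset.sum_congr rfl
            intro s _
            ring
          · apply Finset.sum_congr rfl
            intro j _
            rw [Finset.mul_sum]
            apply Finset.sum_congr rfl
            intro s _
            ring
  rw [final]
  ring
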